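/- Σ_{p ∈ P_n} q^{n - tail(p)} = Σ_{π ∈ T_n} q^{ldes(π)}; that is, the statistic n - tail on Dyck paths of length 2n is equidistributed with the last-descent statistic on 321-avoiding permutations of S_n. -/

import Mathlib

open Finset

/-- A permutation is 321-avoiding if it has no decreasing subsequence of length 3. -/
def Avoids321 {n : ℕ} (π : Equiv.Perm (Fin n)) : Prop :=
  ¬ ∃ i j k : Fin n, i < j ∧ j < k ∧ π k < π j ∧ π j < π i

instance {n : ℕ} : DecidablePred (Avoids321 (n := n)) := fun π =>
  decidable_of_iff (¬ ∃ i j k : Fin n, i < j ∧ j < k ∧ π k < π j ∧ π j < π i) Iff.rfl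

/-- The set `T_n` of 321-avoiding permutations of order `n`. -/
def Tset (n : ℕ) : Finset (Equiv.Perm (Fin n)) :=
  Finset.univ.filter (fun π => Avoids321 π)

/-- The value `π(i)` in one-based notation: positions `1,…,n`, values `1,…,n`. -/
def pval {n : ℕ} (π : Equiv.Perm (Fin n)) (i : ℕ) : ℕ :=
  if h : i - 1 < n then (π ⟨i - 1, h⟩ : ℕ) + 1 else 0

/-- The descent set `Des(π) = {1 ≤ i ≤ n-1 : π(i) > π(i+1)}` (one-based). -/
def desSet {n : ℕ} (π : Equiv.Perm (Fin n)) : Finset ℕ :=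
  (Finset.Icc 1 (n - 1)).filter (fun i => pval π (i + 1) < pval π i)

/-- The last descent of `π` (0 for the identity). -/
def ldes {n : ℕ} (π : Equiv.Perm (Fin n)) : ℕ := (desSet π).sup id

/-- `lind(π) = π⁻¹(n)`, the (one-based) position of the letter `n` in `π`. -/
def lind {n : ℕ} (π : Equiv.Perm (Fin n)) : ℕ := pval π.symm n

/-- The inversion number of `π`. -/
def invNum {n : ℕ} (π : Equiv.Perm (Fin n)) : ℕ :=
  (Finset.univ.filter (fun q : Fin n × Fin n => q.1 < q.2 ∧ π q.2 < π q.1)).card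

/-- A ±1 sequence of length `2n` (`true` = +1) is a Dyck path if it has `n` up
steps and every prefix has at least as many up steps as down steps. -/
def IsDyckPred (n : ℕ) (p : Fin (2 * n) → Bool) : Prop :=
  (Finset.univ.filter (fun i => p i = true)).card = n ∧
  ∀ k ≤ 2 * n,
    k ≤ 2 * (Finset.univ.filter (fun i : Fin (2 * n) => (i : ℕ) < k ∧ p i = true)).card

instance (n : ℕ) : DecidablePred (IsDyckPred n) := fun p => by
  unfold IsDyckPred; infer_instance

/-- The set `P_n` of Dyck paths of length `2n`. -/
def DyckPath (n : ℕ) : Type := { p : Fin (2 * n) → Bool // IsDyckPred n p }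

instance (n : ℕ) : Fintype (DyckPath n) := by unfold DyckPath; infer_instance

/-- The `i`-th step of the path, one-based; `true` = +1, `false` = -1. -/
def pstep {n : ℕ} (p : DyckPath n) (i : ℕ) : Bool :=
  if h : i - 1 < 2 * n then p.1 ⟨i - 1, h⟩ else false

/-- `Des(p) = {1 ≤ i ≤ n-1 : p_i = +1, p_{i+1} = -1}`. -/
def pathDes {n : ℕ} (p : DyckPath n) : Finset ℕ :=
  (Finset.Icc 1 (n - 1)).filter (fun i => pstep p i = true ∧ pstep p (i + 1) = false)

/-- `Des(p⁻¹) = {1 ≤ i ≤ n-1 : p_{2n-i} = +1, p_{2n-i+1} = -1}`. -/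
def pathDesInv {n : ℕ} (p : DyckPath n) : Finset ℕ :=
  (Finset.Icc 1 (n - 1)).filter
    (fun i => pstep p (2 * n - i) = true ∧ pstep p (2 * n - i + 1) = false)

/-- `ldes(p) = max{1 ≤ i ≤ n-1 : p_i = +1, p_{i+1} = -1}` (0 if none). -/
def pathLdes {n : ℕ} (p : DyckPath n) : ℕ := (pathDes p).sup id

/-- `lind(p) = max{1 ≤ i ≤ n : p_i = +1, p_{i+1} = -1}` (0 if none). -/
def pathLind {n : ℕ} (p : DyckPath n) : ℕ :=
  ((Finset.Icc 1 n).filter (fun i => pstep p i = true ∧ pstep p (i + 1) = false)).sup id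

/-- `tail(p) = 2n - max{i : p_i = +1, p_{i+1} = -1}`, the number of consecutive
down steps at the end of `p`. -/
def pathTail {n : ℕ} (p : DyckPath n) : ℕ :=
  2 * n -
    ((Finset.Icc 1 (2 * n - 1)).filter
      (fun i => pstep p i = true ∧ pstep p (i + 1) = false)).sup id

lemma card_filter_le_eq_sum {α : Type*} [DecidableEq α] (s : Finset α) (f : α → ℕ) (k : ℕ) :
    (s.filter fun a => f a ≤ k).card
      = ∑ j ∈ Finset.range (k+1), (s.filter fun a => f a = j).card := by
  induction k with
  | zero => simp [Nat.le_zero]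
  | succ k ih =>
      rw [Finset.sum_range_succ, ← ih, ← Finset.card_union_of_disjoint (by
        simp only [Finset.disjoint_left, Finset.mem_filter]
        rintro a ⟨-, h1⟩ ⟨-, h2⟩; omega)]
      congr 1
      ext a
      simp only [Finset.mem_union, Finset.mem_filter]
      constructor
      · rintro ⟨ha, h⟩
        rcases Nat.lt_or_ge (f a) (k+1) with h'|h'
        · exact Or.inl ⟨ha, by omega⟩
        · exact Or.inr ⟨ha, by omega⟩
      · rintro (⟨ha,h⟩|⟨ha,h⟩) <;> exact ⟨ha, by omega⟩

lemma sum_pow_eq {α : Type*} (s : Finset α) (f : α → ℕ) (N : ℕ) (h : ∀ a ∈ s, f a < N) (q : ℤ) :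
    ∑ a ∈ s, q ^ f a
      = ∑ k ∈ Finset.range N, ((s.filter fun a => f a = k).card : ℤ) * q ^ k := by
  rw [← Finset.sum_fiberwise_of_maps_to (t := Finset.range N) (g := f)
    (fun a ha => Finset.mem_range.2 (h a ha)) (fun a => q ^ f a)]
  refine Finset.sum_congr rfl fun k _ => ?_
  calc ∑ a ∈ s.filter (fun a => f a = k), q ^ f a
      = ∑ _a ∈ s.filter (fun a => f a = k), q ^ k :=
        Finset.sum_congr rfl (fun a ha => by rw [(Finset.mem_filter.1 ha).2])
    _ = _ := by rw [Finset.sum_const, nsmul_eq_mul]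

/-- number of indices `< L` in `Fin N`, when `L ≤ N`. -/
lemma card_filter_lt_eq (N L : ℕ) (h : L ≤ N) :
    ((Finset.univ : Finset (Fin N)).filter fun i : Fin N => (i : ℕ) < L).card = L := by
  have : ((Finset.univ : Finset (Fin N)).filter fun i : Fin N => (i : ℕ) < L).card
      = (Finset.range L).card := by
    apply Finset.card_bij (fun (a : Fin N) _ => (a : ℕ))
    · intro a ha; exact Finset.mem_range.2 (Finset.mem_filter.1 ha).2
    · intro a _ b _ hab; exact Fin.ext hab
    · intro b hb
      have hbL := Finset.mem_range.1 hb
      exact ⟨⟨b, by omega⟩, Finset.mem_filter.2 ⟨Finset.mem_univ _, hbL⟩, rfl⟩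
  rw [this, Finset.card_range]


def upCnt {N : ℕ} (f : Fin N → Bool) (k : ℕ) : ℕ :=
  (Finset.univ.filter (fun i : Fin N => (i:ℕ) < k ∧ f i = true)).card

lemma upCnt_mono {N : ℕ} (f : Fin N → Bool) {k l : ℕ} (h : k ≤ l) : upCnt f k ≤ upCnt f l := by
  apply Finset.card_le_card
  intro i hi
  simp only [Finset.mem_filter] at hi ⊢
  exact ⟨hi.1, by omega, hi.2.2⟩

lemma upCnt_succ {N : ℕ} (f : Fin N → Bool) (k : ℕ) (hk : k < N) :
    upCnt f (k+1) = upCnt f k + (if f ⟨k, hk⟩ then 1 else 0) := by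
  unfold upCnt
  by_cases hf : f ⟨k, hk⟩ = true
  · rw [if_pos hf]
    have : (univ.filter fun i : Fin N => (i:ℕ) < k+1 ∧ f i = true)
        = insert ⟨k,hk⟩ (univ.filter fun i : Fin N => (i:ℕ) < k ∧ f i = true) := by
      ext i
      simp only [Finset.mem_filter, Finset.mem_insert, Finset.mem_univ, true_and]
      constructor
      · rintro ⟨h1, h2⟩
        rcases Nat.lt_or_ge (i : ℕ) k with h'|h'
        · exact Or.inr ⟨h', h2⟩
        · exact Or.inl (Fin.ext (show (i:ℕ) = k by omega))
      · rintro (rfl|⟨h1,h2⟩)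
        · exact ⟨by show k < k + 1; omega, hf⟩
        · exact ⟨by omega, h2⟩
    rw [this, Finset.card_insert_of_notMem (by simp)]
  · rw [if_neg (by simpa using hf), add_zero]
    congr 1
    ext i
    simp only [Finset.mem_filter, Finset.mem_univ, true_and]
    constructor
    · rintro ⟨h1, h2⟩
      refine ⟨?_, h2⟩
      rcases Nat.lt_or_ge (i : ℕ) k with h'|h'
      · exact h'
      · exfalso; have : i = (⟨k, hk⟩ : Fin N) := Fin.ext (show (i:ℕ) = k by omega)
        rw [this] at h2; exact hf h2
    · rintro ⟨h1, h2⟩; exact ⟨by omega, h2⟩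

/-- if every up-step is below `k`, `upCnt f k` is the total number of ups. -/
lemma upCnt_eq_total {N : ℕ} (f : Fin N → Bool) (k : ℕ)
    (h : ∀ i : Fin N, f i = true → (i:ℕ) < k) :
    upCnt f k = (Finset.univ.filter (fun i : Fin N => f i = true)).card := by
  unfold upCnt
  congr 1
  ext i
  simp only [Finset.mem_filter, Finset.mem_univ, true_and]
  exact ⟨fun h' => h'.2, fun h' => ⟨h i h', h'⟩⟩

lemma upCnt_congr {N M : ℕ} (f : Fin N → Bool) (g : Fin M → Bool) (k : ℕ) (hkN : k ≤ N) (hkM : k ≤ M)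
    (h : ∀ j (h1 : j < N) (h2 : j < M), j < k → f ⟨j, h1⟩ = g ⟨j, h2⟩) :
    upCnt f k = upCnt g k := by
  unfold upCnt
  apply Finset.card_bij (fun (a : Fin N) ha => (⟨(a : ℕ), by
    have := (Finset.mem_filter.1 ha).2.1
    omega⟩ : Fin M))
  · intro a ha
    have ha' := (Finset.mem_filter.1 ha).2
    refine Finset.mem_filter.2 ⟨Finset.mem_univ _, ha'.1, ?_⟩
    rw [← h a a.isLt (by omega) ha'.1]
    exact ha'.2
  · intro a _ b _ hab
    exact Fin.ext (Fin.mk_eq_mk.mp hab)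
  · intro b hb
    have hb' := (Finset.mem_filter.1 hb).2
    refine ⟨⟨(b:ℕ), by omega⟩, Finset.mem_filter.2 ⟨Finset.mem_univ _, hb'.1, ?_⟩, rfl⟩
    rw [h b (by omega) b.isLt hb'.1]
    exact hb'.2

def peaks {n : ℕ} (p : DyckPath n) : Finset ℕ :=
  (Finset.Icc 1 (2 * n - 1)).filter (fun i => pstep p i = true ∧ pstep p (i + 1) = false)

def lastPeak {n : ℕ} (p : DyckPath n) : ℕ := (peaks p).sup id

lemma pathTail_eq {n : ℕ} (p : DyckPath n) : pathTail p = 2 * n - lastPeak p := rfl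

lemma pstep_eq {n : ℕ} (p : DyckPath n) (i : ℕ) (h : i - 1 < 2 * n) :
    pstep p i = p.1 ⟨i - 1, h⟩ := dif_pos h

lemma pstep_of_gt {n : ℕ} (p : DyckPath n) {i : ℕ} (h : 2 * n + 1 ≤ i) : pstep p i = false :=
  dif_neg (by omega)

lemma dyck_prefix {n : ℕ} (p : DyckPath n) {k : ℕ} (hk : k ≤ 2 * n) :
    k ≤ 2 * upCnt p.1 k := p.2.2 k hk

lemma ups_total {n : ℕ} (p : DyckPath n) :
    (Finset.univ.filter (fun i : Fin (2 * n) => p.1 i = true)).card = n := p.2.1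

lemma upCnt_top {n : ℕ} (p : DyckPath n) {k : ℕ} (hk : 2 * n ≤ k) : upCnt p.1 k = n := by
  rw [upCnt_eq_total p.1 k (fun i _ => lt_of_lt_of_le i.isLt hk)]
  exact p.2.1

lemma last_step_down {n : ℕ} (p : DyckPath n) (hn : 1 ≤ n) (h : 2 * n - 1 < 2 * n) :
    p.1 ⟨2 * n - 1, h⟩ = false := by
  by_contra hf
  have hf' : p.1 ⟨2 * n - 1, h⟩ = true := by simpa using hf
  have h1 := upCnt_succ p.1 (2 * n - 1) h
  rw [if_pos hf', show 2 * n - 1 + 1 = 2 * n by omega] at h1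
  have h2 : upCnt p.1 (2 * n) = n := upCnt_top p le_rfl
  have h3 := dyck_prefix p (show 2 * n - 1 ≤ 2 * n by omega)
  omega

lemma lastPeak_le {n : ℕ} (p : DyckPath n) : lastPeak p ≤ 2 * n - 1 :=
  Finset.sup_le fun i hi => (Finset.mem_Icc.1 (Finset.mem_filter.1 hi).1).2

lemma after_lastPeak {n : ℕ} (p : DyckPath n) {j : ℕ} (hj : lastPeak p < j) :
    pstep p j = false := by
  by_contra hf
  have hf' : pstep p j = true := by simpa using hf
  have hj1 : 1 ≤ j := by omega
  have hjr : j - 1 < 2 * n := by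
    by_contra hc
    rw [pstep, dif_neg (by omega)] at hf'
    exact Bool.false_ne_true hf'
  have hn : 1 ≤ n := by omega
  have hfu : p.1 ⟨j - 1, hjr⟩ = true := by rwa [pstep_eq p j hjr] at hf'
  set S := Finset.univ.filter (fun i : Fin (2 * n) => j - 1 ≤ (i : ℕ) ∧ p.1 i = true) with hS
  have hne : S.Nonempty := ⟨⟨j - 1, hjr⟩, Finset.mem_filter.2 ⟨Finset.mem_univ _, le_refl _, hfu⟩⟩
  obtain ⟨i0, hi0S, hi0max⟩ := Finset.exists_max_image S Fin.val hne
  rw [hS] at hi0S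
  have hi0 := Finset.mem_filter.1 hi0S
  have hi0lt : (i0 : ℕ) < 2 * n - 1 := by
    rcases Nat.lt_or_ge (i0 : ℕ) (2 * n - 1) with h | h
    · exact h
    · exfalso
      have hlt := i0.isLt
      have he : i0 = (⟨2 * n - 1, by omega⟩ : Fin (2 * n)) :=
        Fin.ext (show (i0 : ℕ) = 2 * n - 1 by omega)
      have hd := last_step_down p hn (by omega)
      rw [he, hd] at hi0
      exact Bool.false_ne_true hi0.2.2
  have hpk : ((i0 : ℕ) + 1) ∈ peaks p := by
    refine Finset.mem_filter.2 ⟨Finset.mem_Icc.2 ⟨by omega, by omega⟩, ?_, ?_⟩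
    · rw [pstep_eq p _ (show (i0 : ℕ) + 1 - 1 < 2 * n by omega)]
      rw [show (⟨(i0 : ℕ) + 1 - 1, by omega⟩ : Fin (2 * n)) = i0 from
        Fin.ext (show (i0 : ℕ) + 1 - 1 = (i0 : ℕ) by omega)]
      exact hi0.2.2
    · rw [pstep_eq p _ (show (i0 : ℕ) + 1 + 1 - 1 < 2 * n by omega)]
      by_contra hc
      have hc' : p.1 ⟨(i0 : ℕ) + 1 + 1 - 1, by omega⟩ = true := by simpa using hc
      have hmem : (⟨(i0 : ℕ) + 1 + 1 - 1, by omega⟩ : Fin (2 * n)) ∈ S :=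
        Finset.mem_filter.2 ⟨Finset.mem_univ _, show j - 1 ≤ (i0 : ℕ) + 1 + 1 - 1 by omega, hc'⟩
      have hcon : (i0 : ℕ) + 1 + 1 - 1 ≤ (i0 : ℕ) := hi0max _ hmem
      omega
  have hle := Finset.le_sup (f := id) hpk
  have : j - 1 ≤ (i0 : ℕ) := hi0.2.1
  have : (i0 : ℕ) + 1 ≤ lastPeak p := hle
  omega

lemma up_lt_lastPeak {n : ℕ} (p : DyckPath n) {i : Fin (2 * n)} (h : p.1 i = true) :
    (i : ℕ) < lastPeak p := by
  by_contra hc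
  have h2 := after_lastPeak p (j := (i : ℕ) + 1) (by omega)
  rw [pstep_eq p _ (show (i : ℕ) + 1 - 1 < 2 * n by have := i.isLt; omega)] at h2
  rw [show (⟨(i : ℕ) + 1 - 1, by have := i.isLt; omega⟩ : Fin (2 * n)) = i from
    Fin.ext (show (i : ℕ) + 1 - 1 = (i : ℕ) by omega)] at h2
  rw [h] at h2
  exact Bool.noConfusion h2

lemma lastPeak_pos {n : ℕ} (p : DyckPath n) (hn : 1 ≤ n) : 1 ≤ lastPeak p := by
  have hne : (Finset.univ.filter (fun i : Fin (2 * n) => p.1 i = true)).Nonempty :=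
    Finset.card_pos.1 (by rw [ups_total]; omega)
  obtain ⟨i, hi⟩ := hne
  have := up_lt_lastPeak p (Finset.mem_filter.1 hi).2
  omega

lemma lastPeak_mem {n : ℕ} (p : DyckPath n) (hn : 1 ≤ n) : lastPeak p ∈ peaks p := by
  have hL := lastPeak_pos p hn
  have hne2 : (peaks p).Nonempty := by
    by_contra hc
    rw [Finset.not_nonempty_iff_eq_empty] at hc
    have : lastPeak p = 0 := by rw [lastPeak, hc]; rfl
    omega
  obtain ⟨b, hb, hbe⟩ := Finset.exists_mem_eq_sup (peaks p) hne2 id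
  rw [lastPeak, hbe]
  exact hb

lemma upCnt_lastPeak {n : ℕ} (p : DyckPath n) : upCnt p.1 (lastPeak p) = n := by
  rw [upCnt_eq_total p.1 _ (fun i hi => up_lt_lastPeak p hi)]
  exact p.2.1

lemma n_le_lastPeak {n : ℕ} (p : DyckPath n) (hn : 1 ≤ n) : n ≤ lastPeak p := by
  set L := lastPeak p with hLdef
  have hL2 : L ≤ 2 * n - 1 := lastPeak_le p
  have hcl : ((Finset.univ : Finset (Fin (2 * n))).filter (fun i : Fin (2 * n) => (i : ℕ) < L)).card = L :=
    card_filter_lt_eq _ _ (by omega)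
  have hsplit := Finset.card_filter_add_card_filter_not
    (s := (Finset.univ : Finset (Fin (2 * n)))) (fun i : Fin (2 * n) => (i : ℕ) < L)
  have hsplit2 := Finset.card_filter_add_card_filter_not
    (s := (Finset.univ : Finset (Fin (2 * n)))) (fun i : Fin (2 * n) => p.1 i = true)
  have hsub : ((Finset.univ : Finset (Fin (2 * n))).filter (fun i : Fin (2 * n) => ¬ (i : ℕ) < L)) ⊆
      ((Finset.univ : Finset (Fin (2 * n))).filter (fun i : Fin (2 * n) => ¬ p.1 i = true)) := by
    intro i hi
    have h2 := (Finset.mem_filter.1 hi).2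
    refine Finset.mem_filter.2 ⟨Finset.mem_univ _, fun hu => h2 (up_lt_lastPeak p hu)⟩
  have hcard := Finset.card_le_card hsub
  have hu : ((Finset.univ : Finset (Fin (2 * n))).filter (fun i : Fin (2 * n) => p.1 i = true)).card = n := p.2.1
  have hcu : (Finset.univ : Finset (Fin (2 * n))).card = 2 * n := by simp
  omega

lemma pathTail_ge_one {n : ℕ} (p : DyckPath n) (hn : 1 ≤ n) : 1 ≤ pathTail p := by
  have := lastPeak_le p
  rw [pathTail_eq]
  omega

lemma pathTail_le {n : ℕ} (p : DyckPath n) (hn : 1 ≤ n) : pathTail p ≤ n := by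
  have := n_le_lastPeak p hn
  rw [pathTail_eq]
  omega

def insPathFun (n : ℕ) (f : Fin (2 * n) → Bool) (t : ℕ) : Fin (2 * (n + 1)) → Bool :=
  fun i => if h : (i : ℕ) < 2 * n ∧ (i : ℕ) < 2 * n + 1 - t then f ⟨(i : ℕ), h.1⟩
    else decide ((i : ℕ) = 2 * n + 1 - t)

def delPathFun (n : ℕ) (f : Fin (2 * (n + 1)) → Bool) (L : ℕ) : Fin (2 * n) → Bool :=
  fun i => if (i : ℕ) < L - 1 then f ⟨(i : ℕ), by have := i.isLt; omega⟩ else false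

lemma insPathFun_lt {n : ℕ} (f : Fin (2 * n) → Bool) (t : ℕ) (ht : 1 ≤ t) {i : ℕ}
    (h : i < 2 * n + 1 - t) (h2 : i < 2 * (n + 1)) (h3 : i < 2 * n) :
    insPathFun n f t ⟨i, h2⟩ = f ⟨i, h3⟩ := dif_pos ⟨h3, h⟩

lemma insPathFun_peak {n : ℕ} (f : Fin (2 * n) → Bool) (t : ℕ) (ht : 1 ≤ t) (ht2 : t ≤ 2 * n + 1)
    (h2 : 2 * n + 1 - t < 2 * (n + 1)) :
    insPathFun n f t ⟨2 * n + 1 - t, h2⟩ = true := by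
  unfold insPathFun
  rw [dif_neg (show ¬(2 * n + 1 - t < 2 * n ∧ 2 * n + 1 - t < 2 * n + 1 - t) by omega)]
  exact decide_eq_true rfl

lemma insPathFun_after {n : ℕ} (f : Fin (2 * n) → Bool) (t : ℕ) (ht : 1 ≤ t) {i : ℕ}
    (h : 2 * n + 1 - t < i) (h2 : i < 2 * (n + 1)) :
    insPathFun n f t ⟨i, h2⟩ = false := by
  unfold insPathFun
  rw [dif_neg (show ¬(i < 2 * n ∧ i < 2 * n + 1 - t) by omega)]
  exact decide_eq_false (show ¬(i = 2 * n + 1 - t) by omega)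

lemma delPathFun_lt {n : ℕ} (f : Fin (2 * (n + 1)) → Bool) (L : ℕ) {i : ℕ}
    (h : i < L - 1) (h2 : i < 2 * n) (h3 : i < 2 * (n + 1)) :
    delPathFun n f L ⟨i, h2⟩ = f ⟨i, h3⟩ := if_pos h

lemma delPathFun_ge {n : ℕ} (f : Fin (2 * (n + 1)) → Bool) (L : ℕ) {i : ℕ}
    (h : L - 1 ≤ i) (h2 : i < 2 * n) :
    delPathFun n f L ⟨i, h2⟩ = false := if_neg (show ¬(i < L - 1) by omega)

lemma ins_isDyck {n : ℕ} (p' : DyckPath n) (t : ℕ) (ht1 : 1 ≤ t) (ht2 : t ≤ n + 1)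
    (htail : ∀ i : Fin (2 * n), 2 * n + 1 - t ≤ (i : ℕ) → p'.1 i = false) :
    IsDyckPred (n + 1) (insPathFun n p'.1 t) := by
  have hup : ∀ i : Fin (2 * n), p'.1 i = true → (i : ℕ) < 2 * n + 1 - t := by
    intro i hi
    by_contra hc
    rw [htail i (by omega)] at hi
    exact Bool.noConfusion hi
  have h1 : upCnt p'.1 (2 * n + 1 - t) = n := by
    rw [upCnt_eq_total p'.1 _ hup]; exact p'.2.1
  have hq1 : upCnt (insPathFun n p'.1 t) (2 * n + 1 - t) = n := by
    rw [upCnt_congr (insPathFun n p'.1 t) p'.1 (2 * n + 1 - t) (by omega) (by omega)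
      (fun j hj1 hj2 hjk => insPathFun_lt p'.1 t ht1 hjk hj1 hj2)]
    exact h1
  have hq2 : upCnt (insPathFun n p'.1 t) (2 * n + 2 - t) = n + 1 := by
    have hs := upCnt_succ (insPathFun n p'.1 t) (2 * n + 1 - t) (by omega)
    rw [if_pos (insPathFun_peak p'.1 t ht1 (by omega) (by omega)),
      show 2 * n + 1 - t + 1 = 2 * n + 2 - t by omega] at hs
    omega
  have hupq : ∀ i : Fin (2 * (n + 1)), insPathFun n p'.1 t i = true → (i : ℕ) < 2 * n + 2 - t := by
    intro i hi
    by_contra hc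
    have hfalse : insPathFun n p'.1 t i = false :=
      insPathFun_after p'.1 t ht1 (show 2 * n + 1 - t < (i : ℕ) by omega) i.isLt
    rw [hfalse] at hi
    exact Bool.noConfusion hi
  constructor
  · rw [← upCnt_eq_total (insPathFun n p'.1 t) (2 * n + 2 - t) hupq]
    exact hq2
  · intro k hk
    show k ≤ 2 * upCnt (insPathFun n p'.1 t) k
    rcases le_or_gt k (2 * n + 1 - t) with h | h
    · rw [upCnt_congr (insPathFun n p'.1 t) p'.1 k (by omega) (by omega)
        (fun j hj1 hj2 hjk => insPathFun_lt p'.1 t ht1 (by omega) hj1 hj2)]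
      exact dyck_prefix p' (by omega)
    · have hmono := upCnt_mono (insPathFun n p'.1 t) (show 2 * n + 2 - t ≤ k by omega)
      omega

lemma ins_lastPeak {n : ℕ} (q : DyckPath (n + 1)) (t : ℕ) (p' : DyckPath n)
    (ht1 : 1 ≤ t) (ht2 : t ≤ n + 1) (hq : q.1 = insPathFun n p'.1 t) :
    lastPeak q = 2 * n + 2 - t ∧ pathTail q = t := by
  have hmem : (2 * n + 2 - t) ∈ peaks q := by
    refine Finset.mem_filter.2 ⟨Finset.mem_Icc.2 ⟨by omega, by omega⟩, ?_, ?_⟩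
    · rw [pstep_eq q _ (show 2 * n + 2 - t - 1 < 2 * (n + 1) by omega), hq]
      rw [show (⟨2 * n + 2 - t - 1, by omega⟩ : Fin (2 * (n + 1))) = ⟨2 * n + 1 - t, by omega⟩ from
        Fin.ext (show 2 * n + 2 - t - 1 = 2 * n + 1 - t by omega)]
      exact insPathFun_peak p'.1 t ht1 (by omega) _
    · rw [pstep_eq q _ (show 2 * n + 2 - t + 1 - 1 < 2 * (n + 1) by omega), hq]
      exact insPathFun_after p'.1 t ht1 (by omega) _
  have hle : lastPeak q ≤ 2 * n + 2 - t := by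
    apply Finset.sup_le
    intro i hi
    have him := Finset.mem_filter.1 hi
    have hb := Finset.mem_Icc.1 him.1
    have hu := him.2.1
    rw [pstep_eq q i (by omega), hq] at hu
    show i ≤ 2 * n + 2 - t
    by_contra hc
    push_neg at hc
    rw [insPathFun_after p'.1 t ht1 (show 2 * n + 1 - t < i - 1 by omega) (by omega)] at hu
    exact Bool.noConfusion hu
  have hge : 2 * n + 2 - t ≤ lastPeak q := Finset.le_sup (f := id) hmem
  have hL : lastPeak q = 2 * n + 2 - t := le_antisymm hle hge
  refine ⟨hL, ?_⟩
  rw [pathTail_eq, hL]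
  omega

lemma del_isDyck {n : ℕ} (p : DyckPath (n + 1)) :
    IsDyckPred n (delPathFun n p.1 (lastPeak p)) := by
  set L := lastPeak p with hLdef
  have hL1 : n + 1 ≤ L := n_le_lastPeak p (by omega)
  have hL2 : L ≤ 2 * n + 1 := by have := lastPeak_le p; omega
  have hpkm := lastPeak_mem p (by omega)
  have hpkU : p.1 ⟨L - 1, by omega⟩ = true := by
    have h := (Finset.mem_filter.1 hpkm).2.1
    rwa [pstep_eq p L (by omega)] at h
  have hdup : ∀ i : Fin (2 * n), delPathFun n p.1 L i = true → (i : ℕ) < L - 1 := by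
    intro i hi
    by_contra hc
    have hfalse : delPathFun n p.1 L i = false := delPathFun_ge p.1 L (by omega) i.isLt
    rw [hfalse] at hi
    exact Bool.noConfusion hi
  have hdcnt : upCnt (delPathFun n p.1 L) (L - 1) = n := by
    rw [upCnt_congr (delPathFun n p.1 L) p.1 (L - 1) (by omega) (by omega)
      (fun j h1 h2 hjk => delPathFun_lt p.1 L hjk h1 h2)]
    have hs := upCnt_succ p.1 (L - 1) (show L - 1 < 2 * (n + 1) by omega)
    rw [if_pos hpkU, show L - 1 + 1 = L by omega] at hs
    have htop := upCnt_lastPeak p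
    rw [← hLdef] at htop
    omega
  have e2 := upCnt_eq_total (delPathFun n p.1 L) (L - 1) hdup
  constructor
  · rw [← upCnt_eq_total (delPathFun n p.1 L) (2 * n) (fun i _ => i.isLt)]
    have e3 := upCnt_eq_total (delPathFun n p.1 L) (2 * n)
      (fun i hi => by have := hdup i hi; omega)
    omega
  · intro k hk
    show k ≤ 2 * upCnt (delPathFun n p.1 L) k
    rcases le_or_gt k (L - 1) with h | h
    · rw [upCnt_congr (delPathFun n p.1 L) p.1 k (by omega) (by omega)
        (fun j h1 h2 hjk => delPathFun_lt p.1 L (by omega) h1 h2)]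
      exact dyck_prefix p (by omega)
    · have e1 := upCnt_eq_total (delPathFun n p.1 L) k
        (fun i hi => by have := hdup i hi; omega)
      omega

lemma del_lastPeak_le {n : ℕ} (p : DyckPath (n + 1)) (d : DyckPath n)
    (hd : d.1 = delPathFun n p.1 (lastPeak p)) :
    lastPeak d ≤ lastPeak p - 1 := by
  apply Finset.sup_le
  intro i hi
  have him := Finset.mem_filter.1 hi
  have hb := Finset.mem_Icc.1 him.1
  have hu := him.2.1
  rw [pstep_eq d i (by omega), hd] at hu
  show i ≤ lastPeak p - 1
  by_contra hc
  push_neg at hc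
  rw [delPathFun_ge p.1 _ (by omega) (by omega)] at hu
  exact Bool.noConfusion hu

lemma ins_del {n : ℕ} (p : DyckPath (n + 1)) :
    insPathFun n (delPathFun n p.1 (lastPeak p)) (pathTail p) = p.1 := by
  set L := lastPeak p with hLdef
  have hL1 : n + 1 ≤ L := n_le_lastPeak p (by omega)
  have hL2 : L ≤ 2 * n + 1 := by have := lastPeak_le p; omega
  have hpkm := lastPeak_mem p (by omega)
  have hpkU : p.1 ⟨L - 1, by omega⟩ = true := by
    have h := (Finset.mem_filter.1 hpkm).2.1
    rwa [pstep_eq p L (by omega)] at h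
  have ht : pathTail p = 2 * (n + 1) - L := pathTail_eq p
  set t := pathTail p with htdef
  have ht1 : 1 ≤ t := pathTail_ge_one p (by omega)
  have ht2 : t ≤ n + 1 := pathTail_le p (by omega)
  have hLt : L = 2 * n + 2 - t := by omega
  funext i
  rcases lt_trichotomy ((i : ℕ)) (2 * n + 1 - t) with h | h | h
  · have e1 : insPathFun n (delPathFun n p.1 L) t ⟨(i : ℕ), i.isLt⟩
        = delPathFun n p.1 L ⟨(i : ℕ), by omega⟩ := insPathFun_lt _ t ht1 h _ _
    have e2 : delPathFun n p.1 L ⟨(i : ℕ), by omega⟩ = p.1 ⟨(i : ℕ), by omega⟩ :=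
      delPathFun_lt p.1 L (by omega) _ _
    exact e1.trans (e2.trans (congrArg p.1 (Fin.eta i i.isLt)))
  · have e1 : insPathFun n (delPathFun n p.1 L) t ⟨2 * n + 1 - t, by omega⟩ = true :=
      insPathFun_peak _ t ht1 (by omega) _
    have hieq : i = (⟨2 * n + 1 - t, by omega⟩ : Fin (2 * (n + 1))) :=
      Fin.ext (show (i : ℕ) = 2 * n + 1 - t by omega)
    rw [hieq]
    rw [show (⟨2 * n + 1 - t, by omega⟩ : Fin (2 * (n + 1))) = ⟨L - 1, by omega⟩ from
      Fin.ext (show 2 * n + 1 - t = L - 1 by omega)] at *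
    rw [hpkU]
    rw [show (⟨L - 1, by omega⟩ : Fin (2 * (n + 1))) = ⟨2 * n + 1 - t, by omega⟩ from
      Fin.ext (show L - 1 = 2 * n + 1 - t by omega)]
    exact insPathFun_peak _ t ht1 (by omega) _
  · have e1 : insPathFun n (delPathFun n p.1 L) t ⟨(i : ℕ), i.isLt⟩ = false :=
      insPathFun_after _ t ht1 h _
    have e2 := after_lastPeak p (j := (i : ℕ) + 1) (by omega)
    rw [pstep_eq p _ (show (i : ℕ) + 1 - 1 < 2 * (n + 1) from by have := i.isLt; omega)] at e2
    exact e1.trans (by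
      have : p.1 ⟨(i : ℕ) + 1 - 1, by have := i.isLt; omega⟩ = p.1 i :=
        congrArg p.1 (Fin.ext (show (i : ℕ) + 1 - 1 = (i : ℕ) by omega))
      rw [← this]
      exact e2.symm)

lemma del_ins {n : ℕ} (p' : DyckPath n) (t : ℕ) (ht1 : 1 ≤ t) (ht2 : t ≤ n + 1)
    (htail : ∀ i : Fin (2 * n), 2 * n + 1 - t ≤ (i : ℕ) → p'.1 i = false)
    (q : DyckPath (n + 1)) (hq : q.1 = insPathFun n p'.1 t) :
    delPathFun n q.1 (lastPeak q) = p'.1 := by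
  have hLq : lastPeak q = 2 * n + 2 - t := (ins_lastPeak q t p' ht1 ht2 hq).1
  funext i
  rcases Nat.lt_or_ge ((i : ℕ)) (2 * n + 1 - t) with h | h
  · have e1 : delPathFun n q.1 (lastPeak q) ⟨(i : ℕ), i.isLt⟩ = q.1 ⟨(i : ℕ), by omega⟩ :=
      delPathFun_lt q.1 _ (by omega) _ _
    have e2 : q.1 ⟨(i : ℕ), by omega⟩ = p'.1 ⟨(i : ℕ), by have := i.isLt; omega⟩ := by
      rw [hq]; exact insPathFun_lt p'.1 t ht1 h _ _
    exact e1.trans (e2.trans (congrArg p'.1 (Fin.eta i i.isLt)))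
  · have e1 : delPathFun n q.1 (lastPeak q) ⟨(i : ℕ), i.isLt⟩ = false :=
      delPathFun_ge q.1 _ (by omega) _
    rw [htail i h]
    exact e1

lemma path_fiber (n k : ℕ) (hk : k ≤ n) :
    ((Finset.univ : Finset (DyckPath (n + 1))).filter (fun p => (n + 1) - pathTail p = k)).card
      = ((Finset.univ : Finset (DyckPath n)).filter (fun p => n - pathTail p ≤ k)).card := by
  apply Finset.card_bij
    (fun (p : DyckPath (n + 1)) _ => (⟨delPathFun n p.1 (lastPeak p), del_isDyck p⟩ : DyckPath n))
  · intro p hp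
    have hstat := (Finset.mem_filter.1 hp).2
    refine Finset.mem_filter.2 ⟨Finset.mem_univ _, ?_⟩
    set d : DyckPath n := ⟨delPathFun n p.1 (lastPeak p), del_isDyck p⟩ with hddef
    have h1 := del_lastPeak_le p d rfl
    have h2 : pathTail d = 2 * n - lastPeak d := pathTail_eq d
    have h3 : pathTail p = 2 * (n + 1) - lastPeak p := pathTail_eq p
    have hL1 : n + 1 ≤ lastPeak p := n_le_lastPeak p (by omega)
    have hL2 : lastPeak p ≤ 2 * n + 1 := by have := lastPeak_le p; omega
    omega
  · intro p1 h1 p2 h2 heq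
    have e1 := ins_del p1
    have e2 := ins_del p2
    have hs1 := (Finset.mem_filter.1 h1).2
    have hs2 := (Finset.mem_filter.1 h2).2
    have hta : pathTail p1 = n + 1 - k := by
      have hb1 := pathTail_ge_one p1 (by omega)
      have hb2 := pathTail_le p1 (by omega)
      omega
    have htb : pathTail p2 = n + 1 - k := by
      have hb1 := pathTail_ge_one p2 (by omega)
      have hb2 := pathTail_le p2 (by omega)
      omega
    have hd : delPathFun n p1.1 (lastPeak p1) = delPathFun n p2.1 (lastPeak p2) :=
      congrArg Subtype.val heq
    apply Subtype.ext
    rw [← e1, ← e2, hta, htb, hd]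
  · intro p' hp'
    have hcond := (Finset.mem_filter.1 hp').2
    have hLp' : lastPeak p' ≤ 2 * n - 1 := lastPeak_le p'
    have h2' : pathTail p' = 2 * n - lastPeak p' := pathTail_eq p'
    have htail : ∀ i : Fin (2 * n), 2 * n + 1 - (n + 1 - k) ≤ (i : ℕ) → p'.1 i = false := by
      intro i hi
      have hIlt := i.isLt
      have ha := after_lastPeak p' (j := (i : ℕ) + 1) (by omega)
      rw [pstep_eq p' _ (show (i : ℕ) + 1 - 1 < 2 * n by omega)] at ha
      have : p'.1 ⟨(i : ℕ) + 1 - 1, by omega⟩ = p'.1 i :=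
        congrArg p'.1 (Fin.ext (show (i : ℕ) + 1 - 1 = (i : ℕ) by omega))
      rwa [this] at ha
    set a : DyckPath (n + 1) :=
      ⟨insPathFun n p'.1 (n + 1 - k), ins_isDyck p' (n + 1 - k) (by omega) (by omega) htail⟩
      with hadef
    refine ⟨a, ?_, ?_⟩
    · refine Finset.mem_filter.2 ⟨Finset.mem_univ _, ?_⟩
      have := (ins_lastPeak a (n + 1 - k) p' (by omega) (by omega) rfl).2
      omega
    · apply Subtype.ext
      exact del_ins p' (n + 1 - k) (by omega) (by omega) htail a rfl

/-! ### Permutation side -/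

lemma ldes_le {n : ℕ} (π : Equiv.Perm (Fin n)) : ldes π ≤ n - 1 :=
  Finset.sup_le fun i hi => (Finset.mem_Icc.1 (Finset.mem_filter.1 hi).1).2

lemma pval_eq {n : ℕ} (π : Equiv.Perm (Fin n)) (i : ℕ) (h : i - 1 < n) :
    pval π i = (π ⟨i - 1, h⟩ : ℕ) + 1 := dif_pos h

lemma desSet_of {n : ℕ} (σ : Equiv.Perm (Fin n)) (x y : Fin n) (hxy : (x : ℕ) + 1 = (y : ℕ))
    (hv : σ y < σ x) : (y : ℕ) ∈ desSet σ := by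
  have hy := y.isLt
  have hx := x.isLt
  refine Finset.mem_filter.2 ⟨Finset.mem_Icc.2 ⟨by omega, by omega⟩, ?_⟩
  rw [pval_eq σ ((y : ℕ) + 1) (by omega), pval_eq σ (y : ℕ) (by omega)]
  rw [show (⟨(y : ℕ) + 1 - 1, by omega⟩ : Fin n) = y from
    Fin.ext (show (y : ℕ) + 1 - 1 = (y : ℕ) by omega)]
  rw [show (⟨(y : ℕ) - 1, by omega⟩ : Fin n) = x from
    Fin.ext (show (y : ℕ) - 1 = (x : ℕ) by omega)]
  have := Fin.lt_def.1 hv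
  omega

lemma of_desSet {n : ℕ} (σ : Equiv.Perm (Fin n)) (b : ℕ) (hb : b ∈ desSet σ) :
    ∃ x y : Fin n, (x : ℕ) + 1 = (y : ℕ) ∧ (y : ℕ) = b ∧ σ y < σ x := by
  have hm := Finset.mem_filter.1 hb
  have hIcc := Finset.mem_Icc.1 hm.1
  have h1 : 1 ≤ b := hIcc.1
  have h2 : b < n := by omega
  refine ⟨⟨b - 1, by omega⟩, ⟨b, h2⟩, show b - 1 + 1 = b by omega, rfl, ?_⟩
  have hd := hm.2
  rw [pval_eq σ (b + 1) (by omega), pval_eq σ b (by omega)] at hd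
  rw [show (⟨b + 1 - 1, by omega⟩ : Fin n) = ⟨b, h2⟩ from
    Fin.ext (show b + 1 - 1 = b by omega)] at hd
  rw [Fin.lt_def]
  omega

lemma le_ldes_of_mem {n : ℕ} {σ : Equiv.Perm (Fin n)} {d : ℕ} (hd : d ∈ desSet σ) :
    d ≤ ldes σ := Finset.le_sup (f := id) hd

lemma exists_descent_fin {n : ℕ} (σ : Equiv.Perm (Fin n)) :
    ∀ (x y : Fin n), x < y → σ y < σ x → ∃ d, d ∈ desSet σ ∧ (x : ℕ) + 1 ≤ d
  | x, y, hxy, hv => by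
    have hvxy := Fin.lt_def.1 hxy
    have hxn : (x : ℕ) + 1 < n := by have := y.isLt; omega
    rcases lt_or_ge (σ ⟨(x : ℕ) + 1, hxn⟩) (σ x) with hlt | hle
    · exact ⟨(x : ℕ) + 1, desSet_of σ x ⟨(x : ℕ) + 1, hxn⟩ rfl hlt, le_refl _⟩
    · rcases eq_or_lt_of_le (show (⟨(x : ℕ) + 1, hxn⟩ : Fin n) ≤ y from
        Fin.le_def.2 (show (x : ℕ) + 1 ≤ (y : ℕ) by omega)) with heq | hlt2
      · exfalso
        rw [heq] at hle
        exact absurd (lt_of_lt_of_le hv hle) (lt_irrefl _)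
      · obtain ⟨d, hd1, hd2⟩ := exists_descent_fin σ ⟨(x : ℕ) + 1, hxn⟩ y hlt2
          (lt_of_lt_of_le hv hle)
        exact ⟨d, hd1, by
          have : (x : ℕ) + 1 + 1 ≤ d := hd2
          omega⟩
termination_by x y => (y : ℕ) - (x : ℕ)
decreasing_by
  show (y : ℕ) - ((x : ℕ) + 1) < (y : ℕ) - (x : ℕ)
  have := Fin.lt_def.1 hxy
  omega

def insPerm {n : ℕ} (m : Fin (n + 1)) (σ : Equiv.Perm (Fin n)) : Equiv.Perm (Fin (n + 1)) :=
  (finSuccEquiv' m).trans ((Equiv.optionCongr σ).trans (finSuccEquiv' (Fin.last n)).symm)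

lemma insPerm_apply_self {n : ℕ} (m : Fin (n + 1)) (σ : Equiv.Perm (Fin n)) :
    insPerm m σ m = Fin.last n := by
  simp [insPerm]

lemma insPerm_apply_succAbove {n : ℕ} (m : Fin (n + 1)) (σ : Equiv.Perm (Fin n)) (x : Fin n) :
    insPerm m σ (m.succAbove x) = Fin.castSucc (σ x) := by
  simp [insPerm, Fin.succAbove_last]

lemma pval_insPerm_lt {n : ℕ} (m : Fin (n + 1)) (σ : Equiv.Perm (Fin n)) {j : ℕ}
    (hj1 : 1 ≤ j) (hjm : j ≤ (m : ℕ)) : pval (insPerm m σ) j = pval σ j := by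
  have hm := m.isLt
  rw [pval_eq _ j (show j - 1 < n + 1 by omega), pval_eq σ j (show j - 1 < n by omega)]
  have hsa : (⟨j - 1, show j - 1 < n + 1 by omega⟩ : Fin (n + 1))
      = m.succAbove ⟨j - 1, show j - 1 < n by omega⟩ := by
    rw [Fin.succAbove_of_castSucc_lt m ⟨j - 1, show j - 1 < n by omega⟩
      (Fin.lt_def.2 (show j - 1 < (m : ℕ) by omega))]
    exact Fin.ext rfl
  rw [hsa, insPerm_apply_succAbove]
  rw [Fin.coe_castSucc]

lemma pval_insPerm_self {n : ℕ} (m : Fin (n + 1)) (σ : Equiv.Perm (Fin n)) :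
    pval (insPerm m σ) ((m : ℕ) + 1) = n + 1 := by
  have hm := m.isLt
  rw [pval_eq _ _ (show (m : ℕ) + 1 - 1 < n + 1 by omega)]
  rw [show (⟨(m : ℕ) + 1 - 1, show (m:ℕ)+1-1 < n+1 by omega⟩ : Fin (n + 1)) = m from
    Fin.ext (show (m : ℕ) + 1 - 1 = (m : ℕ) by omega)]
  rw [insPerm_apply_self, Fin.val_last]

lemma pval_insPerm_gt {n : ℕ} (m : Fin (n + 1)) (σ : Equiv.Perm (Fin n)) {j : ℕ}
    (hjm : (m : ℕ) + 2 ≤ j) (hj : j ≤ n + 1) : pval (insPerm m σ) j = pval σ (j - 1) := by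
  rw [pval_eq _ j (by omega), pval_eq σ (j - 1) (show j - 1 - 1 < n by omega)]
  have hsa : (⟨j - 1, show j - 1 < n + 1 by omega⟩ : Fin (n + 1))
      = m.succAbove ⟨j - 1 - 1, show j - 1 - 1 < n by omega⟩ := by
    rw [Fin.succAbove_of_le_castSucc m ⟨j - 1 - 1, show j - 1 - 1 < n by omega⟩
      (Fin.le_def.2 (show (m : ℕ) ≤ j - 1 - 1 by omega))]
    exact Fin.ext (show j - 1 = j - 1 - 1 + 1 by omega)
  rw [hsa, insPerm_apply_succAbove, Fin.coe_castSucc]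

lemma avoids_insPerm_iff {n : ℕ} (m : Fin (n + 1)) (σ : Equiv.Perm (Fin n)) :
    Avoids321 (insPerm m σ) ↔ Avoids321 σ ∧ ldes σ ≤ (m : ℕ) := by
  constructor
  · intro h
    constructor
    · intro hc
      obtain ⟨i, j, k, hij, hjk, h1, h2⟩ := hc
      refine h ⟨m.succAbove i, m.succAbove j, m.succAbove k,
        Fin.succAbove_lt_succAbove_iff.2 hij, Fin.succAbove_lt_succAbove_iff.2 hjk, ?_, ?_⟩
      · rw [insPerm_apply_succAbove, insPerm_apply_succAbove]
        exact Fin.castSucc_lt_castSucc_iff.2 h1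
      · rw [insPerm_apply_succAbove, insPerm_apply_succAbove]
        exact Fin.castSucc_lt_castSucc_iff.2 h2
    · by_contra hc
      push_neg at hc
      have hne : (desSet σ).Nonempty := by
        by_contra h0
        rw [Finset.not_nonempty_iff_eq_empty] at h0
        rw [ldes, h0] at hc
        simp at hc
      obtain ⟨b, hb, hbe⟩ := Finset.exists_mem_eq_sup (desSet σ) hne id
      have hbv : (m : ℕ) < b := by rw [ldes, hbe] at hc; exact hc
      obtain ⟨x, y, hxy, hyb, hv⟩ := of_desSet σ b hb
      have hx := x.isLt
      have hmx : m ≤ Fin.castSucc x := Fin.le_def.2 (by rw [Fin.coe_castSucc]; omega)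
      have hmy : m ≤ Fin.castSucc y := Fin.le_def.2 (by rw [Fin.coe_castSucc]; omega)
      refine h ⟨m, m.succAbove x, m.succAbove y, ?_, ?_, ?_, ?_⟩
      · exact (Fin.lt_succAbove_iff_le_castSucc m x).2 hmx
      · exact Fin.succAbove_lt_succAbove_iff.2 (Fin.lt_def.2 (by omega))
      · rw [insPerm_apply_succAbove, insPerm_apply_succAbove]
        exact Fin.castSucc_lt_castSucc_iff.2 hv
      · rw [insPerm_apply_succAbove, insPerm_apply_self]
        exact Fin.castSucc_lt_last _
  · rintro ⟨hav, hld⟩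
    intro hc
    obtain ⟨i, j, k, hij, hjk, h1, h2⟩ := hc
    have hπm : insPerm m σ m = Fin.last n := insPerm_apply_self m σ
    have hjne : j ≠ m := by
      intro he; rw [he, hπm] at h2
      exact absurd h2 (Fin.not_lt.2 (Fin.le_last _))
    have hkne : k ≠ m := by
      intro he; rw [he, hπm] at h1
      exact absurd h1 (Fin.not_lt.2 (Fin.le_last _))
    obtain ⟨b, hbj⟩ := Fin.exists_succAbove_eq hjne
    obtain ⟨c, hck⟩ := Fin.exists_succAbove_eq hkne
    have hbc : b < c := by
      rw [← Fin.succAbove_lt_succAbove_iff (p := m), hbj, hck]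
      exact hjk
    have hval : σ c < σ b := by
      rw [← hbj, ← hck, insPerm_apply_succAbove, insPerm_apply_succAbove] at h1
      exact Fin.castSucc_lt_castSucc_iff.1 h1
    by_cases hine : i = m
    · subst hine
      have hmb : (i : ℕ) ≤ (b : ℕ) := by
        have : i < i.succAbove b := by rw [hbj]; exact hij
        have := (Fin.lt_succAbove_iff_le_castSucc i b).1 this
        have := Fin.le_def.1 this
        rwa [Fin.coe_castSucc] at this
      obtain ⟨d, hd1, hd2⟩ := exists_descent_fin σ b c hbc hval
      have hdl := le_ldes_of_mem hd1
      omega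
    · obtain ⟨a, hai⟩ := Fin.exists_succAbove_eq hine
      have hab : a < b := by
        rw [← Fin.succAbove_lt_succAbove_iff (p := m), hai, hbj]
        exact hij
      have hval2 : σ b < σ a := by
        rw [← hai, ← hbj, insPerm_apply_succAbove, insPerm_apply_succAbove] at h2
        exact Fin.castSucc_lt_castSucc_iff.1 h2
      exact hav ⟨a, b, c, hab, hbc, hval, hval2⟩

lemma ldes_insPerm_lt {n : ℕ} (m : Fin (n + 1)) (σ : Equiv.Perm (Fin n))
    (hld : ldes σ ≤ (m : ℕ)) (hm : (m : ℕ) < n) :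
    ldes (insPerm m σ) = (m : ℕ) + 1 := by
  apply le_antisymm
  · apply Finset.sup_le
    intro i hi
    have him := Finset.mem_filter.1 hi
    have hIcc := Finset.mem_Icc.1 him.1
    have hdes := him.2
    show i ≤ (m : ℕ) + 1
    by_contra hc
    push_neg at hc
    have hIcc2 : i ≤ n := by omega
    rw [pval_insPerm_gt m σ (show (m : ℕ) + 2 ≤ i + 1 by omega) (by omega),
        pval_insPerm_gt m σ (show (m : ℕ) + 2 ≤ i by omega) (by omega)] at hdes
    rw [show i + 1 - 1 = (i - 1) + 1 by omega] at hdes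
    have hmem : (i - 1) ∈ desSet σ := by
      refine Finset.mem_filter.2 ⟨Finset.mem_Icc.2 ⟨by omega, by omega⟩, hdes⟩
    have := le_ldes_of_mem hmem
    omega
  · apply Finset.le_sup (f := id)
    refine Finset.mem_filter.2 ⟨Finset.mem_Icc.2 ⟨by omega, by omega⟩, ?_⟩
    rw [show (m : ℕ) + 1 + 1 = (m : ℕ) + 2 by omega]
    rw [pval_insPerm_self m σ, pval_insPerm_gt m σ (by omega) (by omega)]
    rw [pval_eq σ _ (show (m : ℕ) + 2 - 1 - 1 < n by omega)]
    have := (σ ⟨(m : ℕ) + 2 - 1 - 1, show (m : ℕ) + 2 - 1 - 1 < n by omega⟩).isLt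
    omega

lemma ldes_insPerm_last {n : ℕ} (σ : Equiv.Perm (Fin n)) :
    ldes (insPerm (Fin.last n) σ) = ldes σ := by
  have hds : desSet (insPerm (Fin.last n) σ) = desSet σ := by
    ext i
    simp only [desSet, Finset.mem_filter, Finset.mem_Icc]
    constructor
    · rintro ⟨⟨h1, h2⟩, h3⟩
      rcases Nat.lt_or_ge i n with hin | hin
      · rw [pval_insPerm_lt _ σ (by omega) (by rw [Fin.val_last]; omega),
            pval_insPerm_lt _ σ (by omega) (by rw [Fin.val_last]; omega)] at h3
        exact ⟨⟨h1, by omega⟩, h3⟩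
      · exfalso
        have hieq : i = n := by omega
        rw [hieq] at h3
        have e1 : pval (insPerm (Fin.last n) σ) (n + 1) = n + 1 := by
          have := pval_insPerm_self (Fin.last n) σ
          rwa [Fin.val_last] at this
        rw [e1] at h3
        rw [pval_insPerm_lt _ σ (by omega) (by rw [Fin.val_last])] at h3
        rw [pval_eq σ n (by omega)] at h3
        have := (σ ⟨n - 1, by omega⟩).isLt
        omega
    · rintro ⟨⟨h1, h2⟩, h3⟩
      have hn2 : 2 ≤ n := by omega
      refine ⟨⟨h1, by omega⟩, ?_⟩
      rw [pval_insPerm_lt _ σ (by omega) (by rw [Fin.val_last]; omega),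
          pval_insPerm_lt _ σ (by omega) (by rw [Fin.val_last]; omega)]
      exact h3
  rw [ldes, ldes, hds]

def delPerm {n : ℕ} (π : Equiv.Perm (Fin (n + 1))) : Equiv.Perm (Fin n) :=
  Equiv.removeNone
    (((finSuccEquiv' (π.symm (Fin.last n))).symm.trans π).trans (finSuccEquiv' (Fin.last n)))

lemma delPerm_insPerm {n : ℕ} (m : Fin (n + 1)) (σ : Equiv.Perm (Fin n)) :
    delPerm (insPerm m σ) = σ := by
  have hsymm : (insPerm m σ).symm (Fin.last n) = m := by
    rw [Equiv.symm_apply_eq]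
    exact (insPerm_apply_self m σ).symm
  rw [delPerm, hsymm]
  have he : ((finSuccEquiv' m).symm.trans (insPerm m σ)).trans (finSuccEquiv' (Fin.last n))
      = Equiv.optionCongr σ := by
    apply Equiv.ext
    intro x
    cases x with
    | none =>
      simp only [Equiv.trans_apply, finSuccEquiv'_symm_none, Equiv.optionCongr_apply,
        Option.map_none]
      rw [insPerm_apply_self]
      exact finSuccEquiv'_at _
    | some y =>
      simp only [Equiv.trans_apply, finSuccEquiv'_symm_some, Equiv.optionCongr_apply,
        Option.map_some]
      rw [insPerm_apply_succAbove]
      exact finSuccEquiv'_below (Fin.castSucc_lt_last _)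
  rw [he, Equiv.removeNone_optionCongr]

lemma insPerm_delPerm {n : ℕ} (π : Equiv.Perm (Fin (n + 1))) :
    insPerm (π.symm (Fin.last n)) (delPerm π) = π := by
  set m := π.symm (Fin.last n) with hm
  apply Equiv.ext
  intro x
  rcases eq_or_ne x m with rfl | hx
  · rw [insPerm_apply_self, hm, Equiv.apply_symm_apply]
  · obtain ⟨y, hy⟩ := Fin.exists_succAbove_eq hx
    rw [← hy, insPerm_apply_succAbove]
    have hne : π (m.succAbove y) ≠ Fin.last n := by
      intro hcon
      have hπm : π m = Fin.last n := by rw [hm, Equiv.apply_symm_apply]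
      rw [← hπm] at hcon
      exact (Fin.succAbove_ne m y) (π.injective hcon)
    obtain ⟨z, hz⟩ := Fin.exists_succAbove_eq hne
    rw [Fin.succAbove_last] at hz
    have hesome : (((finSuccEquiv' m).symm.trans π).trans (finSuccEquiv' (Fin.last n))) (some y)
        = some z := by
      simp only [Equiv.trans_apply, finSuccEquiv'_symm_some]
      rw [← hz]
      exact finSuccEquiv'_below (Fin.castSucc_lt_last z)
    have hdel : delPerm π y = z := by
      rw [delPerm, ← hm]
      have h2 := Equiv.removeNone_some
        (e := ((finSuccEquiv' m).symm.trans π).trans (finSuccEquiv' (Fin.last n))) ⟨z, hesome⟩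
      rw [hesome] at h2
      exact Option.some_injective _ h2
    rw [hdel, hz]

lemma perm_fiber (n k : ℕ) (hk : k ≤ n) :
    ((Tset (n + 1)).filter (fun π => ldes π = k)).card
      = ((Tset n).filter (fun σ => ldes σ ≤ k)).card := by
  have recover : ∀ π : Equiv.Perm (Fin (n + 1)), π ∈ (Tset (n + 1)).filter (fun π => ldes π = k) →
      π = insPerm (if ldes (delPerm π) = k then Fin.last n else ⟨k - 1, by omega⟩) (delPerm π)
        ∧ Avoids321 (delPerm π) ∧ ldes (delPerm π) ≤ k := by
    intro π hπ
    have hmem := Finset.mem_filter.1 hπ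
    have hav : Avoids321 π := (Finset.mem_filter.1 hmem.1).2
    have hld : ldes π = k := hmem.2
    set m := π.symm (Fin.last n) with hm
    have hrt : insPerm m (delPerm π) = π := insPerm_delPerm π
    have hAv : Avoids321 (insPerm m (delPerm π)) := by rw [hrt]; exact hav
    obtain ⟨hav', hld'⟩ := (avoids_insPerm_iff m (delPerm π)).1 hAv
    rcases Nat.lt_or_ge ((m : ℕ)) n with hmn | hmn
    · have hl := ldes_insPerm_lt m (delPerm π) hld' hmn
      rw [hrt, hld] at hl
      have hifneg : ldes (delPerm π) ≠ k := by omega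
      rw [if_neg hifneg]
      refine ⟨?_, hav', by omega⟩
      rw [show (⟨k - 1, by omega⟩ : Fin (n + 1)) = m from Fin.ext (show k - 1 = (m : ℕ) by omega)]
      exact hrt.symm
    · have hml : m = Fin.last n := Fin.ext (by rw [Fin.val_last]; have := m.isLt; omega)
      have hl := ldes_insPerm_last (delPerm π)
      rw [← hml, hrt, hld] at hl
      rw [if_pos hl.symm]
      rw [← hml]
      exact ⟨hrt.symm, hav', by omega⟩
  apply Finset.card_bij (fun (π : Equiv.Perm (Fin (n + 1))) _ => delPerm π)
  · intro π hπ
    obtain ⟨-, hav', hld'⟩ := recover π hπ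
    exact Finset.mem_filter.2 ⟨Finset.mem_filter.2 ⟨Finset.mem_univ _, hav'⟩, hld'⟩
  · intro π1 h1 π2 h2 heq
    have r1 := (recover π1 h1).1
    have r2 := (recover π2 h2).1
    rw [r1, r2, heq]
  · intro σ hσ
    have hmem := Finset.mem_filter.1 hσ
    have hav : Avoids321 σ := (Finset.mem_filter.1 hmem.1).2
    have hld : ldes σ ≤ k := hmem.2
    by_cases hcase : ldes σ = k
    · refine ⟨insPerm (Fin.last n) σ, ?_, delPerm_insPerm _ _⟩
      refine Finset.mem_filter.2 ⟨Finset.mem_filter.2 ⟨Finset.mem_univ _, ?_⟩, ?_⟩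
      · exact (avoids_insPerm_iff _ σ).2 ⟨hav, by rw [Fin.val_last]; exact le_trans hld hk⟩
      · rw [ldes_insPerm_last]; exact hcase
    · have hklt : ldes σ < k := lt_of_le_of_ne hld hcase
      refine ⟨insPerm ⟨k - 1, by omega⟩ σ, ?_, delPerm_insPerm _ _⟩
      refine Finset.mem_filter.2 ⟨Finset.mem_filter.2 ⟨Finset.mem_univ _, ?_⟩, ?_⟩
      · exact (avoids_insPerm_iff _ σ).2 ⟨hav, show ldes σ ≤ k - 1 by omega⟩
      · have h5 : ldes (insPerm (⟨k - 1, by omega⟩ : Fin (n + 1)) σ) = k - 1 + 1 :=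
          ldes_insPerm_lt _ σ (show ldes σ ≤ k - 1 by omega) (show k - 1 < n by omega)
        rw [h5]
        omega

lemma dyckZeroElem : IsDyckPred 0 (fun i : Fin (2 * 0) => i.elim0) := by
  constructor
  · simp
  · intro k hk
    omega

lemma fiber_eq (n : ℕ) : ∀ k : ℕ,
    ((Finset.univ : Finset (DyckPath n)).filter (fun p => n - pathTail p = k)).card
      = ((Tset n).filter (fun π => ldes π = k)).card := by
  induction n with
  | zero =>
    intro k
    have hT : ∀ π : Equiv.Perm (Fin 0), ldes π = 0 := fun π => by
      have := ldes_le π; omega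
    have hA : ∀ π : Equiv.Perm (Fin 0), Avoids321 π := fun π => by
      rintro ⟨i, j, k, -⟩; exact i.elim0
    by_cases hk : k = 0
    · subst hk
      rw [Finset.filter_true_of_mem (fun p _ => by omega)]
      rw [Finset.filter_true_of_mem (fun π _ => hT π)]
      rw [Tset, Finset.filter_true_of_mem (fun π _ => hA π)]
      rw [Finset.card_univ, Finset.card_univ]
      have h1 : Fintype.card (DyckPath 0) = 1 := Fintype.card_eq_one_iff.2
        ⟨(⟨_, dyckZeroElem⟩ : DyckPath 0), fun y => Subtype.ext (funext fun i => i.elim0)⟩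
      have h2 : Fintype.card (Equiv.Perm (Fin 0)) = 1 := Fintype.card_eq_one_iff.2
        ⟨(1 : Equiv.Perm (Fin 0)), fun y => Equiv.ext fun x => x.elim0⟩
      rw [h1, h2]
    · rw [Finset.card_eq_zero.2 (Finset.filter_eq_empty_iff.2 (fun p _ => by omega)),
          Finset.card_eq_zero.2 (Finset.filter_eq_empty_iff.2 (fun π _ => by
            rw [hT π]; omega))]
  | succ n ih =>
    intro k
    classical
    rcases le_or_gt k n with hk | hk
    · rw [path_fiber n k hk, perm_fiber n k hk,
          card_filter_le_eq_sum _ _ k, card_filter_le_eq_sum _ _ k]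
      exact Finset.sum_congr rfl (fun j _ => ih j)
    · rw [Finset.card_eq_zero.2 (Finset.filter_eq_empty_iff.2 (fun p _ => by
        have h := pathTail_ge_one p (by omega)
        omega)),
        Finset.card_eq_zero.2 (Finset.filter_eq_empty_iff.2 (fun π _ => by
          have := ldes_le π
          omega))]

theorem tail_ldes_equidistribution (n : ℕ) (q : ℤ) :
    ∑ p : DyckPath n, q ^ (n - pathTail p) = ∑ π ∈ Tset n, q ^ ldes π := by
  rw [sum_pow_eq (Finset.univ : Finset (DyckPath n)) (fun p => n - pathTail p) (n + 1)
    (fun p _ => by show n - pathTail p < n + 1; omega) q]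
  rw [sum_pow_eq (Tset n) (fun π => ldes π) (n + 1)
    (fun π _ => by show ldes π < n + 1; have := ldes_le π; omega) q]
  exact Finset.sum_congr rfl fun k _ => by rw [fiber_eq n k]
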